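/- Every word u over a linearly ordered alphabet has a unique decomposition u = u₁u₂⋯u_k where each u_i is an associative Lyndon-Shirshov word and u₁ ≤ u₂ ≤ ⋯ ≤ u_k in the lexicographic order. -/

import Mathlib

open List

/-- The lexicographic order used by Shirshov: a word is *greater* than any of its
proper extensions (`w > w ++ t` for `t ≠ []`), and otherwise words are compared
letterwise by the order on the alphabet.  `LSLt u v` means `u < v`. -/
def LSLt {X : Type*} [LinearOrder X] : List X → List X → Prop
  | _ :: _, [] => True
  | [], _ => False
  | a :: u, b :: v => a < b ∨ (a = b ∧ LSLt u v)

/-- `u ≤ v` in the Shirshov lexicographic order. -/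
def LSLe {X : Type*} [LinearOrder X] (u v : List X) : Prop := u = v ∨ LSLt u v

/-- The degree-lexicographic order: compare first by length, then lexicographically. -/
def DegLt {X : Type*} [LinearOrder X] (u v : List X) : Prop :=
  u.length < v.length ∨ (u.length = v.length ∧ LSLt u v)

/-- `≤` in the degree-lexicographic order. -/
def DegLe {X : Type*} [LinearOrder X] (u v : List X) : Prop := u = v ∨ DegLt u v

/-- An associative Lyndon–Shirshov word: a nonempty word `u` such that `vw > wv`
(lexicographically) for every factorization `u = vw` into nonempty parts. -/
def IsALSW {X : Type*} [LinearOrder X] (u : List X) : Prop :=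
  u ≠ [] ∧ ∀ v w : List X, v ≠ [] → w ≠ [] → u = v ++ w → LSLt (w ++ v) (v ++ w)

/-! ### Auxiliary development -/

/-- Letterwise-strict comparison: `u` is smaller than `v` because of a strict
letter inequality at some position present in both words. -/
def LtL {X : Type*} [LinearOrder X] : List X → List X → Prop
  | a :: u, b :: v => a < b ∨ (a = b ∧ LtL u v)
  | _, _ => False

section Aux

variable {X : Type*} [LinearOrder X]

theorem lslt_irrefl : ∀ u : List X, ¬ LSLt u u
  | [] => by simp [LSLt]
  | a :: u => by simp [LSLt, lslt_irrefl u]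

theorem lslt_trans : ∀ (u v w : List X), LSLt u v → LSLt v w → LSLt u w
  | [], v, w, h, _ => absurd h (by cases v <;> simp [LSLt])
  | a :: u, [], w, _, h2 => absurd h2 (by cases w <;> simp [LSLt])
  | a :: u, b :: v, [], _, _ => by exact trivial
  | a :: u, b :: v, c :: w, h1, h2 => by
    simp only [LSLt] at h1 h2 ⊢
    rcases h1 with h | ⟨rfl, h1⟩
    · rcases h2 with h' | ⟨rfl, h2⟩
      · exact Or.inl (h.trans h')
      · exact Or.inl h
    · rcases h2 with h' | ⟨rfl, h2⟩
      · exact Or.inl h'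
      · exact Or.inr ⟨rfl, lslt_trans u v w h1 h2⟩

theorem lslt_trichotomy : ∀ (u v : List X), u = v ∨ LSLt u v ∨ LSLt v u
  | [], [] => Or.inl rfl
  | [], _ :: _ => Or.inr (Or.inr (by exact trivial))
  | _ :: _, [] => Or.inr (Or.inl (by exact trivial))
  | a :: u, b :: v => by
    rcases lt_trichotomy a b with h | rfl | h
    · exact Or.inr (Or.inl (Or.inl h))
    · rcases lslt_trichotomy u v with rfl | h | h
      · exact Or.inl rfl
      · exact Or.inr (Or.inl (Or.inr ⟨rfl, h⟩))
      · exact Or.inr (Or.inr (Or.inr ⟨rfl, h⟩))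
    · exact Or.inr (Or.inr (Or.inl h))

theorem lslt_of_not_lsle {u v : List X} (h : ¬ LSLe u v) : LSLt v u := by
  rcases lslt_trichotomy u v with rfl | h' | h'
  · exact absurd (Or.inl rfl) h
  · exact absurd (Or.inr h') h
  · exact h'

theorem lsle_trans {u v w : List X} (h1 : LSLe u v) (h2 : LSLe v w) : LSLe u w := by
  rcases h1 with rfl | h1
  · exact h2
  · rcases h2 with rfl | h2
    · exact Or.inr h1
    · exact Or.inr (lslt_trans _ _ _ h1 h2)

theorem lslt_of_lslt_of_lsle {u v w : List X} (h1 : LSLt u v) (h2 : LSLe v w) : LSLt u w := by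
  rcases h2 with rfl | h2
  · exact h1
  · exact lslt_trans _ _ _ h1 h2

/-- A proper extension is smaller: `u ++ t < u` for `t ≠ []`. -/
theorem lslt_append_right : ∀ (u t : List X), t ≠ [] → LSLt (u ++ t) u
  | [], t, ht => by
    cases t with
    | nil => exact absurd rfl ht
    | cons a t => exact trivial
  | a :: u, t, ht => Or.inr ⟨rfl, lslt_append_right u t ht⟩

theorem lslt_append_left_iff : ∀ (p x y : List X), LSLt (p ++ x) (p ++ y) ↔ LSLt x y
  | [], x, y => Iff.rfl
  | a :: p, x, y => by
    simp only [cons_append, LSLt, lt_self_iff_false, false_or, true_and]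
    exact lslt_append_left_iff p x y

theorem ltL_lslt : ∀ {u v : List X}, LtL u v → LSLt u v
  | a :: u, b :: v, h => by
    rcases h with h | ⟨rfl, h⟩
    · exact Or.inl h
    · exact Or.inr ⟨rfl, ltL_lslt h⟩

theorem ltL_append : ∀ {u v : List X} (s t : List X), LtL u v → LtL (u ++ s) (v ++ t)
  | a :: u, b :: v, s, t, h => by
    rcases h with h | ⟨rfl, h⟩
    · exact Or.inl h
    · exact Or.inr ⟨rfl, ltL_append s t h⟩

theorem lslt_cases : ∀ {u v : List X}, LSLt u v → LtL u v ∨ ∃ t, t ≠ [] ∧ u = v ++ t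
  | a :: u, [], _ => Or.inr ⟨a :: u, by simp, rfl⟩
  | a :: u, b :: v, h => by
    rcases h with h | ⟨rfl, h⟩
    · exact Or.inl (Or.inl h)
    · rcases lslt_cases h with h' | ⟨t, ht, rfl⟩
      · exact Or.inl (Or.inr ⟨rfl, h'⟩)
      · exact Or.inr ⟨t, ht, rfl⟩

theorem ltL_of_lslt_of_length {u v : List X} (h : LSLt u v) (hl : u.length ≤ v.length) :
    LtL u v := by
  rcases lslt_cases h with h' | ⟨t, ht, rfl⟩
  · exact h'
  · exfalso
    rw [List.length_append] at hl
    cases t with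
    | nil => exact ht rfl
    | cons x t => simp only [List.length_cons] at hl; omega

theorem ltL_append_cases : ∀ (w v z : List X), LtL (w ++ v) z →
    LtL w z ∨ ∃ z', z = w ++ z' ∧ LtL v z'
  | [], v, z, h => Or.inr ⟨z, rfl, h⟩
  | a :: w, v, b :: z, h => by
    rcases h with h | ⟨rfl, h⟩
    · exact Or.inl (Or.inl h)
    · rcases ltL_append_cases w v z h with h' | ⟨z', rfl, hz'⟩
      · exact Or.inl (Or.inr ⟨rfl, h'⟩)
      · exact Or.inr ⟨z', rfl, hz'⟩

/-- Suffix lemma: a proper nonempty suffix of an ALSW is letterwise smaller than it. -/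
theorem ltL_suffix {u v w : List X} (hu : IsALSW u) (huv : u = v ++ w)
    (hv : v ≠ []) (hw : w ≠ []) : LtL w u := by
  have h1 : LSLt (w ++ v) (v ++ w) := hu.2 v w hv hw huv
  have h2 : LtL (w ++ v) (v ++ w) :=
    ltL_of_lslt_of_length h1 (by simp only [List.length_append]; omega)
  rcases ltL_append_cases w v (v ++ w) h2 with h3 | ⟨z', hz, h3⟩
  · rwa [huv]
  · exfalso
    have hz' : z' ≠ [] := by
      rintro rfl
      rw [append_nil] at hz
      have := congrArg List.length hz
      rw [List.length_append] at this
      cases v with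
      | nil => exact hv rfl
      | cons x v => simp only [List.length_cons] at this; omega
    have h4 : LSLt (z' ++ w) (w ++ z') := hu.2 w z' hw hz' (by rw [huv, hz])
    have h5 : LSLt (v ++ w) (z' ++ w) := ltL_lslt (ltL_append w w h3)
    rw [← hz] at h4
    exact lslt_irrefl _ (lslt_trans _ _ _ h5 h4)

/-- `b < a ++ b` for ALSWs with `b < a`. -/
theorem lslt_self_append {a b : List X} (ha : IsALSW a) (hb : IsALSW b)
    (hba : LSLt b a) : LSLt b (a ++ b) := by
  rcases lslt_cases hba with h | ⟨t, ht, rfl⟩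
  · exact ltL_lslt (by simpa using ltL_append ([] : List X) b h)
  · have h1 : LtL t (a ++ t) := ltL_suffix hb rfl ha.1 ht
    exact (lslt_append_left_iff a t (a ++ t)).mpr (ltL_lslt h1)

/-- Merging lemma: if `a`, `b` are ALSWs with `b < a`, then `a ++ b` is an ALSW. -/
theorem isALSW_append {a b : List X} (ha : IsALSW a) (hb : IsALSW b)
    (hba : LSLt b a) : IsALSW (a ++ b) := by
  have core : LSLt (b ++ a) (a ++ b) := by
    rcases lslt_cases hba with h | ⟨t, ht, rfl⟩
    · exact ltL_lslt (ltL_append a b h)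
    · have h2 := hb.2 a t ha.1 ht rfl
      rw [List.append_assoc a t a]
      exact (lslt_append_left_iff a (t ++ a) (a ++ t)).mpr h2
  refine ⟨by simp [ha.1], ?_⟩
  intro v w hv hw hvw
  rcases List.append_eq_append_iff.mp hvw.symm with ⟨s, has, hws⟩ | ⟨s', hvs, hbs⟩
  · -- has : a = v ++ s, hws : w = s ++ b
    rcases eq_or_ne s [] with rfl | hs
    · rw [append_nil] at has
      rw [nil_append] at hws
      subst has
      subst hws
      exact core
    · have hsa : LtL s a := ltL_suffix ha has hv hs
      have h1 : LtL (s ++ (b ++ v)) (a ++ b) := ltL_append (b ++ v) b hsa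
      have e1 : w ++ v = s ++ (b ++ v) := by rw [hws, List.append_assoc]
      have e2 : v ++ w = a ++ b := by rw [hws, has, ← List.append_assoc]
      rw [e1, e2]
      exact ltL_lslt h1
  · -- hvs : v = a ++ s', hbs : b = s' ++ w
    rcases eq_or_ne s' [] with rfl | hs'
    · rw [append_nil] at hvs
      rw [nil_append] at hbs
      subst hvs
      subst hbs
      exact core
    · have hwb : LtL w b := ltL_suffix hb hbs hs' hw
      have h1 : LSLt w (a ++ b) :=
        lslt_trans _ _ _ (ltL_lslt hwb) (lslt_self_append ha hb hba)
      have h2 : LtL w (a ++ b) := by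
        refine ltL_of_lslt_of_length h1 ?_
        have hwl : w.length ≤ b.length := by rw [hbs, List.length_append]; omega
        have hal : a.length ≠ 0 := fun h => ha.1 (List.length_eq_zero_iff.mp h)
        rw [List.length_append]; omega
      have h3 : LtL (w ++ v) ((a ++ b) ++ []) := ltL_append v [] h2
      rw [append_nil, hvw] at h3
      exact ltL_lslt h3

/-- If `B ≤ e` then `B ++ d ≤ e` (for nonempty `d`). -/
theorem lsle_append_of_lsle {B e : List X} (d : List X) (hd : d ≠ [])
    (h : LSLe B e) : LSLe (B ++ d) e := by
  rcases h with rfl | h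
  · exact Or.inr (lslt_append_right B d hd)
  · rcases lslt_cases h with h' | ⟨t, ht, rfl⟩
    · exact Or.inr (ltL_lslt (by simpa using ltL_append d ([] : List X) h'))
    · refine Or.inr ?_
      rw [List.append_assoc]
      exact lslt_append_right e (t ++ d) (by simp [ht])

theorem chain'_head_lsle {ms : List (List X)} :
    ∀ {b : List X}, Chain' LSLe (b :: ms) → ∀ m ∈ ms, LSLe b m := by
  induction ms with
  | nil => intro b _ m hm; simp at hm
  | cons d rest ih =>
    intro b hch m hm
    replace hch := List.isChain_cons_cons.mp hch
    rcases List.mem_cons.mp hm with rfl | hm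
    · exact hch.1
    · exact lsle_trans hch.1 (ih hch.2 m hm)

/-- Key uniqueness lemma: an ALSW `a = B ++ c` (with `B`, `c` nonempty) cannot have its
tail `c` as a prefix of a concatenation of ALSWs each `≥ B`. -/
theorem no_overflow {a : List X} (ha : IsALSW a) :
    ∀ (ms : List (List X)) (B c : List X), (∀ m ∈ ms, IsALSW m) → (∀ m ∈ ms, LSLe B m) →
      B ≠ [] → c ≠ [] → a = B ++ c → c <+: ms.flatten → False := by
  intro ms
  induction ms with
  | nil =>
    intro B c _ _ _ hc _ hpre
    simp at hpre
    exact hc hpre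
  | cons d rest ih =>
    intro B c halsw hge hB hc ha' hpre
    have hd : IsALSW d := halsw d (by simp)
    simp only [List.flatten_cons] at hpre
    rcases List.prefix_or_prefix_of_prefix (List.prefix_append d rest.flatten) hpre
      with hdc | hcd
    · -- d <+: c
      obtain ⟨c', rfl⟩ := hdc
      rcases eq_or_ne c' [] with rfl | hc'
      · -- c = d exactly
        rw [append_nil] at ha' hc
        have h1 : LSLt a B := by rw [ha']; exact lslt_append_right B d hc
        have h2 : LSLe B d := hge d (by simp)
        have h3 : LtL d a := ltL_suffix ha ha' hB hc
        exact lslt_irrefl a (lslt_of_lslt_of_lsle (lslt_of_lslt_of_lsle h1 h2)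
          (Or.inr (ltL_lslt h3)))
      · refine ih (B ++ d) c' (fun m hm => halsw m (by simp [hm]))
          (fun m hm => lsle_append_of_lsle d hd.1 (hge m (by simp [hm])))
          (by simp [hB]) hc' (by rw [ha', List.append_assoc]) ?_
        obtain ⟨t, ht⟩ := hpre
        rw [List.append_assoc] at ht
        exact ⟨t, List.append_cancel_left ht⟩
    · -- c <+: d
      have h1 : LSLt a B := by rw [ha']; exact lslt_append_right B c hc
      have h2 : LSLe B d := hge d (by simp)
      have h3 : LSLe d c := by
        obtain ⟨t, rfl⟩ := hcd
        rcases eq_or_ne t [] with rfl | ht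
        · exact Or.inl (append_nil c)
        · exact Or.inr (lslt_append_right c t ht)
      have h4 : LtL c a := ltL_suffix ha ha' hB hc
      exact lslt_irrefl a (lslt_of_lslt_of_lsle
        (lslt_of_lslt_of_lsle (lslt_of_lslt_of_lsle h1 h2) h3) (Or.inr (ltL_lslt h4)))

/-- Uniqueness of the Lyndon–Shirshov factorization. -/
theorem factorization_unique :
    ∀ (l m : List (List X)), (∀ w ∈ l, IsALSW w) → Chain' LSLe l →
      (∀ w ∈ m, IsALSW w) → Chain' LSLe m → l.flatten = m.flatten → l = m := by
  intro l
  induction l with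
  | nil =>
    intro m _ _ hm _ hj
    cases m with
    | nil => rfl
    | cons b m' =>
      exfalso
      simp only [List.flatten_nil, List.flatten_cons] at hj
      exact (hm b (by simp)).1 (List.append_eq_nil_iff.mp hj.symm).1
  | cons a l' ihl =>
    intro m hl hlc hm hmc hj
    cases m with
    | nil =>
      exfalso
      simp only [List.flatten_nil, List.flatten_cons] at hj
      exact (hl a (by simp)).1 (List.append_eq_nil_iff.mp hj).1
    | cons b m' =>
      simp only [List.flatten_cons] at hj
      have hpa : a <+: a ++ l'.flatten := List.prefix_append a l'.flatten
      have hpb : b <+: a ++ l'.flatten := by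
        rw [hj]; exact List.prefix_append b m'.flatten
      rcases List.prefix_or_prefix_of_prefix hpa hpb with hab | hba
      · -- a <+: b
        obtain ⟨c, hc⟩ := hab
        rcases eq_or_ne c [] with rfl | hcne
        · rw [append_nil] at hc
          subst hc
          have hj' : l'.flatten = m'.flatten := List.append_cancel_left hj
          have := ihl m' (fun w hw => hl w (by simp [hw])) hlc.tail
            (fun w hw => hm w (by simp [hw])) hmc.tail hj'
          rw [this]
        · exfalso
          have hcpre : c <+: l'.flatten := by
            rw [← hc, List.append_assoc] at hj
            exact ⟨m'.flatten, (List.append_cancel_left hj).symm⟩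
          exact no_overflow (hm b (by simp)) l' a c
            (fun w hw => hl w (by simp [hw]))
            (chain'_head_lsle hlc) (hl a (by simp)).1 hcne hc.symm hcpre
      · -- b <+: a
        obtain ⟨c, hc⟩ := hba
        rcases eq_or_ne c [] with rfl | hcne
        · rw [append_nil] at hc
          subst hc
          have hj' : l'.flatten = m'.flatten := List.append_cancel_left hj
          have := ihl m' (fun w hw => hl w (by simp [hw])) hlc.tail
            (fun w hw => hm w (by simp [hw])) hmc.tail hj'
          rw [this]
        · exfalso
          have hcpre : c <+: m'.flatten := by
            rw [← hc, List.append_assoc] at hj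
            exact ⟨l'.flatten, List.append_cancel_left hj⟩
          exact no_overflow (hl a (by simp)) m' b c
            (fun w hw => hm w (by simp [hw]))
            (chain'_head_lsle hmc) (hm b (by simp)).1 hcne hc.symm hcpre

theorem join_map_singleton : ∀ u : List X, (u.map (fun x => [x])).flatten = u
  | [] => rfl
  | a :: t => congrArg (List.cons a) (join_map_singleton t)

theorem not_chain'_split {R : List X → List X → Prop} :
    ∀ (l : List (List X)), ¬ Chain' R l →
      ∃ l₁ a b l₂, l = l₁ ++ a :: b :: l₂ ∧ ¬ R a b := by
  intro l
  induction l with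
  | nil => intro h; exact absurd List.isChain_nil h
  | cons a t iht =>
    intro h
    cases t with
    | nil => exact absurd (List.isChain_singleton a) h
    | cons b t' =>
      replace h : ¬(R a b ∧ Chain' R (b :: t')) := fun hc => h (List.isChain_cons_cons.mpr hc)
      by_cases hab : R a b
      · have hnc : ¬ Chain' R (b :: t') := fun hc => h ⟨hab, hc⟩
        obtain ⟨l₁, x, y, l₂, heq, hxy⟩ := iht hnc
        exact ⟨a :: l₁, x, y, l₂, by rw [heq]; rfl, hxy⟩
      · exact ⟨[], a, b, t', by simp, hab⟩

/-- Existence of the factorization, by repeatedly merging adjacent violations. -/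
theorem factorization_exists :
    ∀ (n : ℕ) (l : List (List X)), l.length ≤ n → (∀ w ∈ l, IsALSW w) →
      ∃ m : List (List X), m.flatten = l.flatten ∧ (∀ w ∈ m, IsALSW w) ∧ Chain' LSLe m := by
  intro n
  induction n with
  | zero =>
    intro l hn _
    rw [Nat.le_zero, List.length_eq_zero_iff] at hn
    subst hn
    exact ⟨[], rfl, by simp, List.isChain_nil⟩
  | succ n ihn =>
    intro l hn hl
    by_cases hch : Chain' LSLe l
    · exact ⟨l, rfl, hl, hch⟩
    · obtain ⟨l₁, a, b, l₂, rfl, hab⟩ := not_chain'_split _ hch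
      have ha : IsALSW a := hl a (by simp)
      have hb : IsALSW b := hl b (by simp)
      have hba : LSLt b a := lslt_of_not_lsle hab
      have hmerge : IsALSW (a ++ b) := isALSW_append ha hb hba
      have hlen : (l₁ ++ (a ++ b) :: l₂).length ≤ n := by
        simp only [List.length_append, List.length_cons] at hn ⊢
        omega
      have hall : ∀ w ∈ l₁ ++ (a ++ b) :: l₂, IsALSW w := by
        intro w hw
        rcases List.mem_append.mp hw with hw | hw
        · exact hl w (by simp [hw])
        · rcases List.mem_cons.mp hw with rfl | hw
          · exact hmerge
          · exact hl w (by simp [hw])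
      obtain ⟨m, hm1, hm2, hm3⟩ := ihn (l₁ ++ (a ++ b) :: l₂) hlen hall
      refine ⟨m, ?_, hm2, hm3⟩
      rw [hm1]
      simp [List.flatten_append, List.flatten_cons, List.append_assoc]

end Aux

/-- Chen–Fox–Lyndon / Lyndon–Shirshov factorization.
Every word `u` has a unique decomposition `u = u₁u₂⋯u_k` where each `uᵢ` is an
ALSW and `u₁ ≤ u₂ ≤ ⋯ ≤ u_k` lexicographically. -/
theorem lyndon_shirshov_factorization {X : Type*} [LinearOrder X] (u : List X) :
    ∃! l : List (List X),
      u = l.flatten ∧ (∀ w ∈ l, IsALSW w) ∧ l.Chain' LSLe := by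
  have h0 : ∀ w ∈ u.map (fun x => [x]), IsALSW w := by
    intro w hw
    obtain ⟨x, -, rfl⟩ := List.mem_map.mp hw
    refine ⟨by simp, ?_⟩
    intro v w hv hw hvw
    exfalso
    have hlen := congrArg List.length hvw
    simp only [List.length_append, List.length_cons, List.length_nil] at hlen
    cases v with
    | nil => exact hv rfl
    | cons _ _ =>
      cases w with
      | nil => exact hw rfl
      | cons _ _ => simp only [List.length_cons] at hlen; omega
  have hj : (u.map (fun x => [x])).flatten = u := join_map_singleton u
  obtain ⟨m, hm1, hm2, hm3⟩ := factorization_exists (u.map (fun x => [x])).length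
    (u.map (fun x => [x])) le_rfl h0
  refine ⟨m, ⟨by rw [hm1, hj], hm2, hm3⟩, ?_⟩
  rintro y ⟨hy1, hy2, hy3⟩
  exact factorization_unique y m hy2 hy3 hm2 hm3 (by rw [← hy1, hm1, hj])
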